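/- If X is an irreducible tree-shift, then X is topologically transitive: for any nonempty open sets U_1, U_2 ⊆ X there exists a word w ∈ Σ* such that σ_w(U_1) ∩ U_2 ≠ ∅. -/
import Mathlib


/-!  Tree-shifts on the binary tree: basic definitions. -/

/-- An infinite tree over alphabet `A`: a labeling of all finite words over
`Σ = {0,1}` (encoded as `List Bool`). -/
abbrev InfTree (A : Type*) : Type _ := List Bool → A

/-- The shift map `σ_w`: `(σ_w t)_x = t_{wx}`. -/
def treeShift {A : Type*} (w : List Bool) (t : InfTree A) : InfTree A :=
  fun x => t (w ++ x)

/-- A pattern: a labeling of a finite prefix-closed set of words. -/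
structure TreePattern (A : Type*) where
  supp : Finset (List Bool)
  prefixClosed : ∀ x ∈ supp, ∀ y : List Bool, y <+: x → y ∈ supp
  label : (x : List Bool) → x ∈ supp → A

/-- The pattern `p` occurs in the tree `t` rooted at the node `x`. -/
def TreePattern.occursAt {A : Type*} (p : TreePattern A) (t : InfTree A) (x : List Bool) : Prop :=
  ∀ y (hy : y ∈ p.supp), p.label y hy = t (x ++ y)

/-- The tree-shift `X_F` defined by a set `F` of forbidden patterns. -/
def treeShiftOf {A : Type*} (F : Set (TreePattern A)) : Set (InfTree A) :=
  { t | ∀ p ∈ F, ∀ x : List Bool, ¬ p.occursAt t x }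

/-- A subset of trees is a tree-shift if it is `X_F` for some forbidden set `F`. -/
def IsTreeShift {A : Type*} (X : Set (InfTree A)) : Prop :=
  ∃ F : Set (TreePattern A), X = treeShiftOf F

/-- A tree-shift of finite type: `X_F` for some finite forbidden set `F`. -/
def IsTSFT {A : Type*} (X : Set (InfTree A)) : Prop :=
  ∃ F : Set (TreePattern A), F.Finite ∧ X = treeShiftOf F

/-- A Markov tree-shift: `X_F` for a finite forbidden set `F` consisting of 2-blocks,
i.e. patterns with support `Σ_1 = {ε, 0, 1}`. -/
def IsMarkovTS {A : Type*} (X : Set (InfTree A)) : Prop :=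
  ∃ F : Set (TreePattern A), F.Finite ∧
    (∀ p ∈ F, p.supp = ({[], [false], [true]} : Finset (List Bool))) ∧
    X = treeShiftOf F

/-- The `n`-block of `t` rooted at `x` equals `u`; an `n`-block is recorded as a function
on all words, only its values on words of length `< n` (i.e. on `Σ_{n-1}`) are relevant. -/
def blockEqAt {A : Type*} (t : InfTree A) (x : List Bool) (n : ℕ) (u : List Bool → A) : Prop :=
  ∀ y : List Bool, y.length < n → t (x ++ y) = u y

/-- `u ∈ B_n(X)` : the `n`-block `u` appears in some tree of `X`. -/
def memBlocks {A : Type*} (X : Set (InfTree A)) (n : ℕ) (u : List Bool → A) : Prop :=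
  ∃ t ∈ X, ∃ x : List Bool, blockEqAt t x n u

/-- The maximal length `|P|` of a word in a finite set of words `P`. -/
def maxLen (P : Finset (List Bool)) : ℕ := P.sup List.length

/-- `P` is a complete prefix set (CPS): it is a prefix set (no word of `P` is a prefix of
another word of `P`) and every word of length at least `|P|` has a prefix in `P`. -/
def IsCPS (P : Finset (List Bool)) : Prop :=
  (∀ p ∈ P, ∀ q ∈ P, p <+: q → p = q) ∧
  (∀ x : List Bool, maxLen P ≤ x.length → ∃ p ∈ P, p <+: x)

/-- Irreducibility of a tree-shift: any two `n`-blocks `u, v` of `X` can be realized in a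
single tree of `X`, with `u` rooted at `ε` and `v` rooted at every word of a CPS whose
words have length at least `n`. -/
def IrreducibleTS {A : Type*} (X : Set (InfTree A)) : Prop :=
  ∀ n : ℕ, 0 < n → ∀ u v : List Bool → A, memBlocks X n u → memBlocks X n v →
    ∃ t ∈ X, ∃ P : Finset (List Bool), IsCPS P ∧ (∀ x ∈ P, n ≤ x.length) ∧
      blockEqAt t [] n u ∧ ∀ x ∈ P, blockEqAt t x n v

/-- Mixing for tree-shifts: there are two CPS `P_0, P_1` connecting any two blocks, the
choice of the CPS being governed by the last letter `w_{n-1}` of `w ∈ Σ^{n-1}`. -/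
def MixingTS {A : Type*} (X : Set (InfTree A)) : Prop :=
  ∃ P0 P1 : Finset (List Bool), IsCPS P0 ∧ IsCPS P1 ∧
    ∀ n m : ℕ, 0 < n → 0 < m → ∀ u v : List Bool → A,
      memBlocks X n u → memBlocks X m v →
      ∃ t ∈ X, blockEqAt t [] n u ∧
        ∀ w : List Bool, w.length = n - 1 → ∀ b : Bool, w.getLast? = some b →
          ∀ x ∈ (if b then P1 else P0), blockEqAt t (w ++ x) m v

/-- A periodic tree: `σ_x t = t` for all `x` in some complete prefix set. -/
def IsPeriodicTree {A : Type*} (t : InfTree A) : Prop :=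
  ∃ P : Finset (List Bool), IsCPS P ∧ ∀ x ∈ P, treeShift x t = t

/-- The metric on trees: `d(t,t') = 2^{-n}` where `n` is the least length of a
disagreement, and `d(t,t') = 0` if `t = t'`. -/
noncomputable def treeDist {A : Type*} (t t' : InfTree A) : ℝ :=
  haveI := Classical.propDecidable (t = t')
  if t = t' then 0
  else (2⁻¹ : ℝ) ^ sInf { n : ℕ | ∃ x : List Bool, x.length = n ∧ t x ≠ t' x }

/-- `U` is an open subset of `X` in the topology induced by the metric `treeDist`. -/
def IsOpenIn {A : Type*} (X U : Set (InfTree A)) : Prop :=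
  U ⊆ X ∧ ∀ t ∈ U, ∃ ε : ℝ, 0 < ε ∧ ∀ t' ∈ X, treeDist t t' < ε → t' ∈ U

/-- The `m`-block of `t` rooted at `x`, as a function on `Σ_{m-1}`. -/
def blockFun {A : Type*} (m : ℕ) (t : InfTree A) (x : List Bool) :
    { y : List Bool // y.length < m } → A :=
  fun y => t (x ++ y.1)

/-- `φ` is a sliding block code on `X`: it is induced by a local `m`-block map `Φ`. -/
def IsSlidingBlockCode {A B : Type*} (X : Set (InfTree A)) (φ : InfTree A → InfTree B) : Prop :=
  ∃ m : ℕ, 0 < m ∧ ∃ Φ : ({ y : List Bool // y.length < m } → A) → B,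
    ∀ t ∈ X, ∀ x : List Bool, φ t x = Φ (blockFun m t x)

/-- `φ` is a conjugacy from `X` onto `Y`: an invertible sliding block code whose inverse
is also a sliding block code. -/
def IsConjugacy {A B : Type*} (X : Set (InfTree A)) (Y : Set (InfTree B))
    (φ : InfTree A → InfTree B) : Prop :=
  IsSlidingBlockCode X φ ∧ Set.MapsTo φ X Y ∧
    ∃ ψ : InfTree B → InfTree A, IsSlidingBlockCode Y ψ ∧ Set.MapsTo ψ Y X ∧
      (∀ t ∈ X, ψ (φ t) = t) ∧ (∀ s ∈ Y, φ (ψ s) = s)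

/-- The `m`-th higher block code `φ_m`, sending `t` to the tree of `m`-blocks of `t`. -/
def higherBlockMap {A : Type*} (m : ℕ) (t : InfTree A) :
    InfTree ({ y : List Bool // y.length < m } → A) :=
  fun x => blockFun m t x

/-- The vertex tree-shift determined by two transition matrices `A_0, A_1`. -/
def vertexTreeShift {n : ℕ} (A0 A1 : Matrix (Fin n) (Fin n) ℕ) : Set (InfTree (Fin n)) :=
  { t | ∀ x : List Bool,
      A0 (t x) (t (x ++ [false])) = 1 ∧ A1 (t x) (t (x ++ [true])) = 1 }

/-- `A_x = A_{x_l} A_{x_{l-1}} ⋯ A_{x_1}` for a word `x = x_1 … x_l`. -/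
def matWord {n : ℕ} (A0 A1 : Matrix (Fin n) (Fin n) ℕ) :
    List Bool → Matrix (Fin n) (Fin n) ℕ
  | [] => 1
  | b :: rest => matWord A0 A1 rest * (if b then A1 else A0)

/-- A 0-1 matrix. -/
def ZeroOne {n : ℕ} (M : Matrix (Fin n) (Fin n) ℕ) : Prop := ∀ i j, M i j ≤ 1

/-- The graph representation of the pair `(A_0, A_1)` is essential: every row and every
column of each matrix contains a nonzero entry. -/
def EssentialPair {n : ℕ} (A0 A1 : Matrix (Fin n) (Fin n) ℕ) : Prop :=
  (∀ i, ∃ j, 0 < A0 i j) ∧ (∀ j, ∃ i, 0 < A0 i j) ∧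
  (∀ i, ∃ j, 0 < A1 i j) ∧ (∀ j, ∃ i, 0 < A1 i j)

/-- An irreducible nonnegative matrix. -/
def MatIrreducible {n : ℕ} (A : Matrix (Fin n) (Fin n) ℕ) : Prop :=
  ∀ i j, ∃ k : ℕ, 1 ≤ k ∧ 0 < (A ^ k) i j

/-- A primitive nonnegative matrix. -/
def MatPrimitive {n : ℕ} (A : Matrix (Fin n) (Fin n) ℕ) : Prop :=
  ∃ k : ℕ, 1 ≤ k ∧ ∀ i j, 0 < (A ^ k) i j

/-- `V_w`: the set of possible terminal states of the labeled path `w`. -/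
def Vset {n : ℕ} (M : Matrix (Fin n) (Fin n) ℕ) : Set (Fin n) := { j | ∃ i, 0 < M i j }

/-- A cycle: a word `w = w_1 … w_k` with `k ≥ 2`, `w_k = w_1` and `V_w = V_{w_1}`. -/
def IsCycle {n : ℕ} (A0 A1 : Matrix (Fin n) (Fin n) ℕ) (w : List Bool) : Prop :=
  2 ≤ w.length ∧ w.getLast? = w.head? ∧
    Vset (matWord A0 A1 w) = Vset (matWord A0 A1 (w.take 1))


lemma shift_mem_of_isTreeShift {A : Type*} {X : Set (InfTree A)} (hX : IsTreeShift X)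
    {t : InfTree A} (ht : t ∈ X) (w : List Bool) : treeShift w t ∈ X := by
  obtain ⟨F, rfl⟩ := hX
  intro p hp x hocc
  exact ht p hp (w ++ x) (fun y hy => by
    simpa [treeShift, List.append_assoc] using hocc y hy)

lemma treeDist_le_of_agree {A : Type*} {t t' : InfTree A} {n : ℕ}
    (h : ∀ y : List Bool, y.length < n → t y = t' y) :
    treeDist t t' ≤ (2⁻¹ : ℝ) ^ n := by
  unfold treeDist
  split
  · positivity
  · rename_i hne
    have hle : n ≤ sInf { m : ℕ | ∃ x : List Bool, x.length = m ∧ t x ≠ t' x } := by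
      apply le_csInf
      · by_contra hempty
        rw [Set.not_nonempty_iff_eq_empty] at hempty
        apply hne
        funext x
        by_contra hx
        have : x.length ∈ { m : ℕ | ∃ x : List Bool, x.length = m ∧ t x ≠ t' x } :=
          ⟨x, rfl, hx⟩
        simp [hempty] at this
      · rintro m ⟨x, rfl, hx⟩
        by_contra hlt
        exact hx (h x (lt_of_not_ge hlt))
    calc (2⁻¹ : ℝ) ^ sInf { m : ℕ | ∃ x : List Bool, x.length = m ∧ t x ≠ t' x }
        ≤ (2⁻¹ : ℝ) ^ n := by
          apply pow_le_pow_of_le_one (by norm_num) (by norm_num) hle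

/-- an irreducible tree-shift is topologically transitive. -/
theorem transitive_of_irreducible {A : Type} [Fintype A] (X : Set (InfTree A))
    (hX : IsTreeShift X) (hirr : IrreducibleTS X) :
    ∀ U1 U2 : Set (InfTree A), IsOpenIn X U1 → IsOpenIn X U2 →
      U1.Nonempty → U2.Nonempty →
      ∃ w : List Bool, (treeShift w '' U1 ∩ U2).Nonempty := by
  intro U1 U2 hU1 hU2 ⟨t1, ht1⟩ ⟨t2, ht2⟩
  obtain ⟨ε1, hε1, hball1⟩ := hU1.2 t1 ht1
  obtain ⟨ε2, hε2, hball2⟩ := hU2.2 t2 ht2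
  set ε := min ε1 ε2 with hε
  have hεpos : (0:ℝ) < ε := lt_min hε1 hε2
  obtain ⟨n, hn⟩ : ∃ n : ℕ, (2⁻¹ : ℝ) ^ n < ε := by
    obtain ⟨n, hn⟩ := exists_pow_lt_of_lt_one hεpos (by norm_num : (2⁻¹:ℝ) < 1)
    exact ⟨n, hn⟩
  set N := n + 1 with hN
  have hNpos : 0 < N := Nat.succ_pos n
  have hNlt : (2⁻¹ : ℝ) ^ N < ε := by
    calc (2⁻¹ : ℝ) ^ N ≤ (2⁻¹ : ℝ) ^ n :=
          pow_le_pow_of_le_one (by norm_num) (by norm_num) (Nat.le_succ n)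
      _ < ε := hn
  have hmem1 : memBlocks X N t1 := ⟨t1, hU1.1 ht1, [], fun y _ => rfl⟩
  have hmem2 : memBlocks X N t2 := ⟨t2, hU2.1 ht2, [], fun y _ => rfl⟩
  obtain ⟨t, htX, P, hP, hPlen, hu, hv⟩ := hirr N hNpos t1 t2 hmem1 hmem2
  obtain ⟨w, hwP, -⟩ := hP.2 (List.replicate (maxLen P) false) (by simp)
  refine ⟨w, treeShift w t, ⟨t, ?_, rfl⟩, ?_⟩
  · apply hball1 t htX
    have : treeDist t1 t ≤ (2⁻¹ : ℝ) ^ N :=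
      treeDist_le_of_agree (fun y hy => (hu y hy).symm)
    exact lt_of_le_of_lt this (lt_of_lt_of_le hNlt (min_le_left _ _))
  · apply hball2 _ (shift_mem_of_isTreeShift hX htX w)
    have hagree : ∀ y : List Bool, y.length < N → t2 y = treeShift w t y := by
      intro y hy
      exact (hv w hwP y hy).symm
    have : treeDist t2 (treeShift w t) ≤ (2⁻¹ : ℝ) ^ N :=
      treeDist_le_of_agree hagree
    exact lt_of_le_of_lt this (lt_of_lt_of_le hNlt (min_le_right _ _))
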